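/- Fix z ∈ ℝ and assume: (a) ∫ f(z,x) dμ(x) < ∞; (b) there exist δ > 0 and a μ-integrable function G with |∂₁f(ζ, x)| ≤ G(x) for all ζ ∈ (z−δ, z+δ) and μ-almost every x; (c) the map x ↦ ∂₁f(z,x)/f(z,x) is antitone (nonincreasing) on (−∞, x̄]. Then for every w ≤ x̄ the map ζ ↦ F(w, ζ) is differentiable at z with ∂F(w, z)/∂z ≥ 0. Moreover the derivative is strictly positive if the map in (c) is strictly antitone and 0 < μ((−∞, w]) < 1. (Interpretation: the posterior cdf increases in the signal, so for nearby signals z1 < z2 the posterior given the lower signal first-order stochastically dominates the posterior given the higher signal.) -/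

import Mathlib

open MeasureTheory Set

/-- Let `X ≤ x̄` with prior `μ` (`μ((−∞,x̄]) = 1`) and let
`f(z,x) > 0` be conditional signal densities, differentiable in the signal
argument with derivative `f₁`. Fix a signal `z` with positive, finite
denominator, and assume: (a) `x ↦ f(z,x)` is `μ`-integrable; (b) a dominated
bound for `f₁` near `z`; (c) `x ↦ f₁(z,x)/f(z,x)` is antitone on `(−∞, x̄]`.
Then for every `w ≤ x̄` the posterior cdf
`ζ ↦ (∫_{(−∞,w]} f(ζ,x) dμ)/(∫_{(−∞,x̄]} f(ζ,x) dμ)` is differentiable at `z`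
with nonnegative derivative, and the derivative is strictly positive if the
log-derivative is strictly antitone and `0 < μ((−∞,w]) < 1`. -/
theorem stmt_13 (xbar : ℝ) (μ : Measure ℝ) [IsProbabilityMeasure μ]
    (hμ : μ (Iic xbar) = 1)
    (f f₁ : ℝ → ℝ → ℝ)
    (hfpos : ∀ z x, 0 < f z x)
    (hfmeas : ∀ z, Measurable fun x => f z x)
    (hfderiv : ∀ x z, HasDerivAt (fun ζ => f ζ x) (f₁ z x) z)
    (z : ℝ)
    (ha : Integrable (fun x => f z x) μ)
    (hden : 0 < ∫ x in Iic xbar, f z x ∂μ)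
    (hb : ∃ δ > (0 : ℝ), ∃ G : ℝ → ℝ, Integrable G μ ∧
      ∀ ζ ∈ Ioo (z - δ) (z + δ), ∀ᵐ x ∂μ, |f₁ ζ x| ≤ G x)
    (hc : AntitoneOn (fun x => f₁ z x / f z x) (Iic xbar)) :
    ∀ w ≤ xbar, ∃ d : ℝ,
      HasDerivAt
        (fun ζ => (∫ x in Iic w, f ζ x ∂μ) / (∫ x in Iic xbar, f ζ x ∂μ)) d z ∧
      0 ≤ d ∧
      (StrictAntiOn (fun x => f₁ z x / f z x) (Iic xbar) →
        0 < μ (Iic w) → μ (Iic w) < 1 → 0 < d) := by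
  obtain ⟨δ, hδ, G0, hG0int, hbound0⟩ := hb
  set I : Set ℝ := Ioo (z - δ) (z + δ) with hI
  set G : ℝ → ℝ := hG0int.1.mk G0 with hGdef
  have hGmeas : Measurable G := hG0int.1.stronglyMeasurable_mk.measurable
  have hGeq : G0 =ᵐ[μ] G := hG0int.1.ae_eq_mk
  have hGint : Integrable G μ := hG0int.congr hGeq
  have hbound : ∀ ζ ∈ I, ∀ᵐ x ∂μ, |f₁ ζ x| ≤ G x := by
    intro ζ hζ
    filter_upwards [hbound0 ζ hζ, hGeq] with x h1 h2
    rw [← h2]; exact h1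
  have hzI : z ∈ I := ⟨by linarith, by linarith⟩
  -- measurability of f and f₁, jointly
  have hfcont : ∀ x, Continuous fun ζ => f ζ x := by
    intro x
    rw [continuous_iff_continuousAt]
    exact fun ζ => (hfderiv x ζ).continuousAt
  have hFm : Measurable fun p : ℝ × ℝ => f p.2 p.1 :=
    (measurable_uncurry_of_continuous_of_measurable hfcont hfmeas).comp measurable_swap
  have key : ∀ x ζ, Filter.Tendsto (fun n : ℕ => (f (ζ + 1/((n:ℝ)+1)) x - f ζ x) / (1/((n:ℝ)+1)))
      Filter.atTop (nhds (f₁ ζ x)) := by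
    intro x ζ
    have h1 : Filter.Tendsto (fun n : ℕ => ζ + 1/((n:ℝ)+1)) Filter.atTop (nhdsWithin ζ {ζ}ᶜ) := by
      apply tendsto_nhdsWithin_of_tendsto_nhds_of_eventually_within
      · simpa using tendsto_const_nhds.add (tendsto_one_div_add_atTop_nhds_zero_nat (𝕜 := ℝ))
      · filter_upwards with n
        simp only [mem_compl_iff, mem_singleton_iff]
        intro h
        have : (1:ℝ)/((n:ℝ)+1) = 0 := by linarith [congrArg (· - ζ) h, add_sub_cancel_left ζ (1/((n:ℝ)+1))]
        have : (0:ℝ) < 1/((n:ℝ)+1) := by positivity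
        linarith
    have h2 := hasDerivAt_iff_tendsto_slope.mp (hfderiv x ζ)
    refine (h2.comp h1).congr fun n => ?_
    simp only [Function.comp_apply, slope_def_field, add_sub_cancel_left]
  have hF1m : Measurable fun p : ℝ × ℝ => f₁ p.2 p.1 := by
    apply measurable_of_tendsto_metrizable
      (f := fun n (p : ℝ × ℝ) => (f (p.2 + 1/((n:ℝ)+1)) p.1 - f p.2 p.1) / (1/((n:ℝ)+1)))
    · intro n
      exact ((hFm.comp (measurable_fst.prodMk (measurable_snd.add_const _))).sub hFm).div_const _
    · rw [tendsto_pi_nhds]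
      exact fun p => key p.1 p.2
  have hf1meas : ∀ ζ, Measurable fun x => f₁ ζ x :=
    fun ζ => hF1m.comp (measurable_id.prodMk measurable_const)
  have hf1measb : ∀ x, Measurable fun ζ => f₁ ζ x :=
    fun x => hF1m.comp (measurable_const.prodMk measurable_id)
  -- swap quantifiers via Fubini
  set ν : Measure ℝ := volume.restrict I with hν
  have hswap : ∀ᵐ x ∂μ, ∀ᵐ ζ ∂ν, |f₁ ζ x| ≤ G x := by
    have hms : MeasurableSet {q : ℝ × ℝ | |f₁ q.2 q.1| ≤ G q.1} :=
      measurableSet_le hF1m.abs (hGmeas.comp measurable_fst)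
    refine (Measure.ae_ae_comm (p := fun x ζ => |f₁ ζ x| ≤ G x) hms).mpr ?_
    filter_upwards [ae_restrict_mem measurableSet_Ioo] with ζ hζ
    exact hbound ζ hζ
  have hGnn : ∀ᵐ x ∂μ, 0 ≤ G x :=
    (hbound z hzI).mono fun x hx => (abs_nonneg _).trans hx
  -- a.e. Lipschitz on the ball
  have hball : Metric.ball z δ = I := Real.ball_eq_Ioo z δ
  have hlip : ∀ᵐ x ∂μ, LipschitzOnWith (Real.nnabs (G x)) (fun ζ => f ζ x) (Metric.ball z δ) := by
    filter_upwards [hswap, hGnn] with x hx hx0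
    rw [lipschitzOnWith_iff_dist_le_mul]
    intro a ha' b hb'
    rw [hball] at ha' hb'
    have hsub : uIoc a b ⊆ I := by
      intro t ht
      rcases ht with ⟨ht1, ht2⟩
      exact ⟨(lt_min ha'.1 hb'.1).trans ht1, ht2.trans_lt (max_lt ha'.2 hb'.2)⟩
    have hii : IntervalIntegrable (fun t => f₁ t x) volume a b := by
      rw [intervalIntegrable_iff]
      apply Integrable.mono' (g := fun _ => G x)
        (integrableOn_const measure_Ioc_lt_top.ne)
        (hf1measb x).aestronglyMeasurable
      filter_upwards [ae_restrict_of_ae_restrict_of_subset hsub hx] with t ht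
      simpa [Real.norm_eq_abs] using ht
    have hftc : ∫ t in a..b, f₁ t x = f b x - f a x :=
      intervalIntegral.integral_eq_sub_of_hasDerivAt (fun t _ => hfderiv x t) hii
    have hae : ∀ᵐ t, t ∈ uIoc a b → ‖f₁ t x‖ ≤ G x := by
      filter_upwards [(ae_restrict_iff' measurableSet_Ioo).mp hx] with t ht hmem
      simpa [Real.norm_eq_abs] using ht (hsub hmem)
    have hle := intervalIntegral.norm_integral_le_of_norm_le_const_ae hae
    rw [hftc] at hle
    calc dist (f a x) (f b x) = ‖f b x - f a x‖ := by
          rw [dist_comm, Real.dist_eq, Real.norm_eq_abs]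
      _ ≤ G x * |b - a| := hle
      _ ≤ ↑(Real.nnabs (G x)) * dist a b := by
          rw [Real.coe_nnabs, Real.dist_eq, abs_sub_comm]
          exact mul_le_mul_of_nonneg_right (le_abs_self _) (abs_nonneg _)
  -- differentiation under the integral
  have main : ∀ s : Set ℝ,
      Integrable (fun x => f₁ z x) (μ.restrict s) ∧
      HasDerivAt (fun ζ => ∫ x in s, f ζ x ∂μ) (∫ x in s, f₁ z x ∂μ) z := by
    intro s
    exact hasDerivAt_integral_of_dominated_loc_of_lip (Metric.ball_mem_nhds z hδ)
      (Filter.Eventually.of_forall fun ζ => ((hfmeas ζ).aestronglyMeasurable).restrict)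
      (ha.restrict)
      ((hf1meas z).aestronglyMeasurable.restrict)
      (ae_restrict_of_ae hlip)
      (hGint.restrict)
      (Filter.Eventually.of_forall fun x => hfderiv x z)
  intro w hw
  obtain ⟨hNint, hN⟩ := main (Iic w)
  obtain ⟨hDint, hD⟩ := main (Iic xbar)
  set NA := ∫ x in Iic w, f z x ∂μ with hNA
  set MA := ∫ x in Iic w, f₁ z x ∂μ with hMA
  set DD := ∫ x in Iic xbar, f z x ∂μ with hDD
  set MD := ∫ x in Iic xbar, f₁ z x ∂μ with hMD
  set NC := ∫ x in Ioc w xbar, f z x ∂μ with hNC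
  set MC := ∫ x in Ioc w xbar, f₁ z x ∂μ with hMC
  set gw := f₁ z w / f z w with hgw
  -- splitting
  have hsplitD : DD = NA + NC := by
    rw [hDD, hNA, hNC, ← setIntegral_union (Iic_disjoint_Ioc le_rfl) measurableSet_Ioc
      ha.integrableOn ha.integrableOn, Iic_union_Ioc_eq_Iic hw]
  have hMCint : IntegrableOn (fun x => f₁ z x) (Ioc w xbar) μ :=
    IntegrableOn.mono_set hDint Ioc_subset_Iic_self
  have hsplitM : MD = MA + MC := by
    rw [hMD, hMA, hMC, ← setIntegral_union (Iic_disjoint_Ioc le_rfl) measurableSet_Ioc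
      hNint hMCint, Iic_union_Ioc_eq_Iic hw]
  have hNA0 : 0 ≤ NA := setIntegral_nonneg measurableSet_Iic fun x _ => (hfpos z x).le
  have hNC0 : 0 ≤ NC := setIntegral_nonneg measurableSet_Ioc fun x _ => (hfpos z x).le
  have hwmem : w ∈ Iic xbar := hw
  -- key inequalities
  have hMAge : gw * NA ≤ MA := by
    have h0 : 0 ≤ ∫ x in Iic w, (f₁ z x - gw * f z x) ∂μ := by
      apply setIntegral_nonneg measurableSet_Iic
      intro x hx
      have hxm : x ∈ Iic xbar := le_trans hx hw
      have hgle : gw ≤ f₁ z x / f z x := hc hxm hwmem hx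
      have hrw : f₁ z x - gw * f z x = (f₁ z x / f z x - gw) * f z x := by
        rw [sub_mul, div_mul_cancel₀ _ (hfpos z x).ne']
      rw [hrw]
      exact mul_nonneg (sub_nonneg.mpr hgle) (hfpos z x).le
    rw [integral_sub hNint (ha.integrableOn.const_mul gw), integral_const_mul] at h0
    linarith
  have hMCle : MC ≤ gw * NC := by
    have h0 : 0 ≤ ∫ x in Ioc w xbar, (gw * f z x - f₁ z x) ∂μ := by
      apply setIntegral_nonneg measurableSet_Ioc
      intro x hx
      have hxm : x ∈ Iic xbar := hx.2
      have hgle : f₁ z x / f z x ≤ gw := hc hwmem hxm hx.1.le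
      have hrw : gw * f z x - f₁ z x = (gw - f₁ z x / f z x) * f z x := by
        rw [sub_mul, div_mul_cancel₀ _ (hfpos z x).ne']
      rw [hrw]
      exact mul_nonneg (sub_nonneg.mpr hgle) (hfpos z x).le
    rw [integral_sub (ha.integrableOn.const_mul gw) hMCint, integral_const_mul] at h0
    linarith
  refine ⟨(MA * DD - NA * MD) / DD ^ 2, hN.div hD hden.ne', ?_, ?_⟩
  · apply div_nonneg _ (sq_nonneg _)
    rw [hsplitD, hsplitM]
    nlinarith [mul_le_mul_of_nonneg_right hMAge hNC0, mul_le_mul_of_nonneg_left hMCle hNA0]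
  · intro hs h0 h1
    have hsum : μ (Iic w) + μ (Ioc w xbar) = 1 := by
      rw [← measure_union (Iic_disjoint_Ioc le_rfl) measurableSet_Ioc,
        Iic_union_Ioc_eq_Iic hw, hμ]
    have hμC : 0 < μ (Ioc w xbar) := by
      by_contra h
      rw [not_lt, le_zero_iff] at h
      rw [h, add_zero] at hsum
      exact absurd hsum h1.ne
    have hNApos : 0 < NA := by
      rw [hNA, setIntegral_pos_iff_support_of_nonneg_ae
        (Filter.Eventually.of_forall fun x => (hfpos z x).le) ha.integrableOn]
      have heq : Function.support (fun x => f z x) ∩ Iic w = Iic w :=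
        inter_eq_self_of_subset_right fun x _ => Function.mem_support.mpr (hfpos z x).ne'
      rwa [heq]
    have hpos : 0 < ∫ x in Ioc w xbar, (gw * f z x - f₁ z x) ∂μ := by
      have hptpos : ∀ x ∈ Ioc w xbar, 0 < gw * f z x - f₁ z x := by
        intro x hx
        have hglt : f₁ z x / f z x < gw := hs hwmem hx.2 hx.1
        have hrw : gw * f z x - f₁ z x = (gw - f₁ z x / f z x) * f z x := by
          rw [sub_mul, div_mul_cancel₀ _ (hfpos z x).ne']
        rw [hrw]
        exact mul_pos (sub_pos.mpr hglt) (hfpos z x)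
      rw [setIntegral_pos_iff_support_of_nonneg_ae
        ((ae_restrict_mem measurableSet_Ioc).mono fun x hx => (hptpos x hx).le)
        (((ha.integrableOn.const_mul gw).sub hMCint))]
      have heq : Function.support (fun x => gw * f z x - f₁ z x) ∩ Ioc w xbar = Ioc w xbar :=
        inter_eq_self_of_subset_right fun x hx => Function.mem_support.mpr (hptpos x hx).ne'
      rwa [heq]
    have hMClt : MC < gw * NC := by
      rw [integral_sub (ha.integrableOn.const_mul gw) hMCint, integral_const_mul] at hpos
      linarith
    apply div_pos _ (pow_pos hden 2)
    rw [hsplitD, hsplitM]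
    nlinarith [mul_le_mul_of_nonneg_right hMAge hNC0, mul_lt_mul_of_pos_left hMClt hNApos]
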